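/- For every real t > 0 one has Σ_{n∈ℤ} (2π·n²·t - 1) · exp(-π·n²·t) = -2π · t^{-3/2} · Σ_{n∈ℤ} n² · exp(-π·n²/t). (Equivalently, writing θ(t) = Σ_{n∈ℤ} e^{-πn²t}, one has -2t·θ′(t) - θ(t) = 2·t^{-3/2}·θ′(1/t).) -/

import Mathlib

open Real Set

lemma stmt15_aux_summable (k : ℕ) {c : ℝ} (hc : 0 < c) :
    Summable (fun n : ℤ => (n : ℝ) ^ (2 * k) * Real.exp (-π * (n : ℝ) ^ 2 * c)) := by
  have hnat : Summable (fun n : ℕ => (n : ℝ) ^ (2 * k) * Real.exp (-π * (n : ℝ) ^ 2 * c)) := by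
    refine Summable.of_nonneg_of_le (fun n => by positivity) (fun n => ?_)
      (Real.summable_pow_mul_exp_neg_nat_mul (2 * k) (mul_pos pi_pos hc))
    refine mul_le_mul_of_nonneg_left ?_ (by positivity)
    rw [Real.exp_le_exp]
    have hn : (n : ℝ) ≤ (n : ℝ) ^ 2 := by
      exact_mod_cast Nat.le_self_pow two_ne_zero n
    nlinarith [mul_le_mul_of_nonneg_left hn (le_of_lt (mul_pos pi_pos hc))]
  apply Summable.of_nat_of_neg_add_one
  · refine hnat.congr fun n => ?_
    push_cast
    ring
  · refine ((summable_nat_add_iff 1).mpr hnat).congr fun n => ?_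
    push_cast
    rw [Even.neg_pow (even_two_mul k), neg_sq]

noncomputable def stmt15F (s : ℝ) : ℝ := ∑' n : ℤ, Real.exp (-π * (n : ℝ) ^ 2 * s)

lemma stmt15F_hasDerivAt {x : ℝ} (hx : 0 < x) :
    HasDerivAt stmt15F
      (∑' n : ℤ, Real.exp (-π * (n : ℝ) ^ 2 * x) * (-π * (n : ℝ) ^ 2)) x := by
  have key : HasDerivAt (fun s : ℝ => ∑' n : ℤ, Real.exp (-π * (n : ℝ) ^ 2 * s))
      (∑' n : ℤ, Real.exp (-π * (n : ℝ) ^ 2 * x) * (-π * (n : ℝ) ^ 2)) x := ?_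
  · exact key
  have h2 : (0 : ℝ) < x / 2 := by linarith
  have hu : Summable (fun n : ℤ => π * (n : ℝ) ^ 2 * Real.exp (-π * (n : ℝ) ^ 2 * (x / 2))) := by
    refine ((stmt15_aux_summable 1 h2).mul_left π).congr fun n => ?_
    ring
  refine hasDerivAt_tsum_of_isPreconnected (t := Set.Ioi (x / 2))
      (g := fun (n : ℤ) (s : ℝ) => Real.exp (-π * (n : ℝ) ^ 2 * s))
      (g' := fun (n : ℤ) (s : ℝ) => Real.exp (-π * (n : ℝ) ^ 2 * s) * (-π * (n : ℝ) ^ 2))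
      hu isOpen_Ioi isPreconnected_Ioi
      (fun n y _ => ?_) (fun n y hy => ?_) (Set.mem_Ioi.mpr (by linarith : x / 2 < x)) ?_
      (Set.mem_Ioi.mpr (by linarith : x / 2 < x))
  · have h := (hasDerivAt_id y).const_mul (-π * (n : ℝ) ^ 2)
    simp only [mul_one] at h
    exact h.exp
  · have hyy : x / 2 < y := hy
    rw [Real.norm_eq_abs, abs_mul, abs_of_pos (Real.exp_pos _), neg_mul, abs_neg,
      abs_of_nonneg (by positivity)]
    rw [mul_comm]
    refine mul_le_mul_of_nonneg_left ?_ (by positivity)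
    rw [Real.exp_le_exp]
    nlinarith [mul_le_mul_of_nonneg_left hyy.le (show (0:ℝ) ≤ π * (n:ℝ)^2 by positivity)]
  · refine (stmt15_aux_summable 0 hx).congr fun n => ?_
    norm_num

lemma stmt15F_eq {s : ℝ} (hs : 0 < s) :
    stmt15F s = (s ^ ((1 : ℝ) / 2))⁻¹ * stmt15F s⁻¹ := by
  have h := Real.tsum_exp_neg_mul_int_sq hs
  calc stmt15F s = ∑' n : ℤ, Real.exp (-π * s * (n : ℝ) ^ 2) :=
        tsum_congr fun n => by ring_nf
    _ = 1 / s ^ ((1:ℝ)/2) * ∑' n : ℤ, Real.exp (-π / s * (n : ℝ) ^ 2) := by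
        rw [h]
    _ = (s ^ ((1 : ℝ) / 2))⁻¹ * stmt15F s⁻¹ := by
        rw [one_div, stmt15F]
        congr 1
        refine tsum_congr fun n => ?_
        congr 1
        field_simp

theorem stmt15 (t : ℝ) (ht : 0 < t) :
    ∑' n : ℤ, (2 * π * (n : ℝ) ^ 2 * t - 1) * Real.exp (-π * (n : ℝ) ^ 2 * t)
      = -2 * π * t ^ (-(3:ℝ)/2) * ∑' n : ℤ, (n : ℝ) ^ 2 * Real.exp (-π * (n : ℝ) ^ 2 / t) := by
  have ht' : t ≠ 0 := ht.ne'
  have hti : (0 : ℝ) < t⁻¹ := inv_pos.mpr ht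
  set A : ℝ := t ^ ((1 : ℝ) / 2) with hA_def
  have hA : 0 < A := Real.rpow_pos_of_pos ht _
  have hA2 : A ^ 2 = t := by
    rw [hA_def, ← Real.rpow_natCast (t ^ ((1:ℝ)/2)) 2, ← Real.rpow_mul ht.le]
    norm_num
  -- derivative of F at t, two ways
  have hderiv1 := stmt15F_hasDerivAt ht
  have h1 : HasDerivAt (fun s : ℝ => s ^ ((1:ℝ)/2)) ((1:ℝ)/2 * t ^ ((1:ℝ)/2 - 1)) t :=
    Real.hasDerivAt_rpow_const (Or.inl ht')
  have h1' : HasDerivAt (fun s : ℝ => (s ^ ((1:ℝ)/2))⁻¹)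
      (-((1:ℝ)/2 * t ^ ((1:ℝ)/2 - 1)) / (t ^ ((1:ℝ)/2)) ^ 2) t := h1.inv hA.ne'
  have h2 : HasDerivAt (fun s : ℝ => stmt15F s⁻¹)
      ((∑' n : ℤ, Real.exp (-π * (n : ℝ) ^ 2 * t⁻¹) * (-π * (n : ℝ) ^ 2)) * (-(t ^ 2)⁻¹)) t :=
    (stmt15F_hasDerivAt hti).comp t (hasDerivAt_inv ht')
  have hR : HasDerivAt (fun s : ℝ => (s ^ ((1:ℝ)/2))⁻¹ * stmt15F s⁻¹)
      (-((1:ℝ)/2 * t ^ ((1:ℝ)/2 - 1)) / (t ^ ((1:ℝ)/2)) ^ 2 * stmt15F t⁻¹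
        + (t ^ ((1:ℝ)/2))⁻¹ *
          ((∑' n : ℤ, Real.exp (-π * (n : ℝ) ^ 2 * t⁻¹) * (-π * (n : ℝ) ^ 2)) * (-(t ^ 2)⁻¹))) t :=
    h1'.mul h2
  have heq : stmt15F =ᶠ[nhds t] (fun s : ℝ => (s ^ ((1:ℝ)/2))⁻¹ * stmt15F s⁻¹) := by
    filter_upwards [Ioi_mem_nhds ht] with s hs
    exact stmt15F_eq hs
  have hderiv2 := hR.congr_of_eventuallyEq heq
  have hL := hderiv1.unique hderiv2
  -- abbreviations
  set S2 : ℝ := ∑' n : ℤ, (n : ℝ) ^ 2 * Real.exp (-π * (n : ℝ) ^ 2 * t) with hS2_def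
  set Sg2 : ℝ := ∑' n : ℤ, (n : ℝ) ^ 2 * Real.exp (-π * (n : ℝ) ^ 2 * t⁻¹) with hSg2_def
  set P : ℝ := stmt15F t⁻¹ with hP_def
  have hsum1 : (∑' n : ℤ, Real.exp (-π * (n : ℝ) ^ 2 * t) * (-π * (n : ℝ) ^ 2)) = -π * S2 := by
    rw [hS2_def, ← tsum_mul_left]
    exact tsum_congr fun n => by ring
  have hsum2 : (∑' n : ℤ, Real.exp (-π * (n : ℝ) ^ 2 * t⁻¹) * (-π * (n : ℝ) ^ 2)) = -π * Sg2 := by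
    rw [hSg2_def, ← tsum_mul_left]
    exact tsum_congr fun n => by ring
  rw [hsum1, hsum2] at hL
  have hS0 : stmt15F t = A⁻¹ * P := stmt15F_eq ht
  -- rewrite the goal
  have hgoalL : ∑' n : ℤ, (2 * π * (n : ℝ) ^ 2 * t - 1) * Real.exp (-π * (n : ℝ) ^ 2 * t)
      = 2 * π * t * S2 - stmt15F t := by
    have hs2 : Summable (fun n : ℤ => 2 * π * t * ((n:ℝ)^2 * Real.exp (-π*(n:ℝ)^2*t))) :=
      ((stmt15_aux_summable 1 ht).congr (fun n => by norm_num)).mul_left _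
    have hs0 : Summable (fun n : ℤ => Real.exp (-π*(n:ℝ)^2*t)) :=
      (stmt15_aux_summable 0 ht).congr (fun n => by norm_num)
    rw [stmt15F, hS2_def, ← tsum_mul_left, ← Summable.tsum_sub hs2 hs0]
    exact tsum_congr fun n => by ring
  have hgoalR : (∑' n : ℤ, (n : ℝ) ^ 2 * Real.exp (-π * (n : ℝ) ^ 2 / t)) = Sg2 := by
    refine tsum_congr fun n => by rw [div_eq_mul_inv]
  rw [hgoalL, hgoalR, hS0]
  -- rpow simplifications
  have hA12 : t ^ ((1:ℝ)/2) = A := rfl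
  have hpow1 : t ^ ((1:ℝ)/2 - 1) = A / t := by
    rw [Real.rpow_sub ht, Real.rpow_one, hA12]
  have hpow2 : t ^ (-(3:ℝ)/2) = A / t ^ 2 := by
    rw [show (-(3:ℝ)/2) = (1:ℝ)/2 - 2 by norm_num, Real.rpow_sub ht, Real.rpow_two, hA12]
  rw [hpow1, hA12] at hL
  rw [hpow2]
  rw [← hA2] at hL ⊢
  have hA' : A ≠ 0 := hA.ne'
  field_simp at hL ⊢
  have hB : 2 * π * A ^ 7 * S2 - A ^ 4 * P + 2 * π * A ^ 2 * Sg2 = 0 := by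
    refine mul_left_cancel₀ (pow_ne_zero 2 hA') ?_
    linear_combination (-(A ^ 4) : ℝ) * hL
  linear_combination (-1 : ℝ) * hL
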